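/- Let s be an odd integer with s ≥ 3. Then liminf_{n→∞} ex(n, P^{(3)}_s)/C(n,3) ≥ 1 − 4/(s−1)^2, where C(n,3) is the binomial coefficient. -/

import Mathlib

open Finset
open scoped Classical

/-- Edge set of the natural tight path `P^{(r)}_s` on vertex set `[s] = {1,…,s}`:
all intervals of `r` consecutive integers. -/
def pathEdges (r s : ℕ) : Finset (Finset ℕ) :=
  (Finset.Icc 1 (s - r + 1)).image (fun i => Finset.Icc i (i + r - 1))

/-- Edge set of the loose path `LP^{(r)}_s`: only the first and last edges. -/
def loosePathEdges (r s : ℕ) : Finset (Finset ℕ) :=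
  {Finset.Icc 1 r, Finset.Icc (s - r + 1) s}

/-- `C` is the edge set of a copy in `K^{(r)}_n` of the ordered hypergraph with
vertex set `[s]` and edge set `E`, i.e. the image of `E` under a strictly
increasing map `[s] → [n]`. -/
def IsCopy (n s : ℕ) (E : Finset (Finset ℕ)) (C : Finset (Finset ℕ)) : Prop :=
  ∃ f : ℕ → ℕ, StrictMonoOn f ↑(Finset.Icc 1 s) ∧
    (∀ v ∈ Finset.Icc 1 s, f v ∈ Finset.Icc 1 n) ∧
    C = E.image (fun e => e.image f)

/-- A transversal: a set `T` of `r`-element subsets of `[n]` meeting every copy. -/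
def IsTransversal (n r s : ℕ) (E : Finset (Finset ℕ)) (T : Finset (Finset ℕ)) : Prop :=
  T ⊆ (Finset.Icc 1 n).powersetCard r ∧
  ∀ C : Finset (Finset ℕ), IsCopy n s E C → ∃ e ∈ C, e ∈ T

/-- The transversal number `τ(n,H)`. -/
noncomputable def tau (n r s : ℕ) (E : Finset (Finset ℕ)) : ℕ :=
  sInf {m | ∃ T : Finset (Finset ℕ), IsTransversal n r s E T ∧ T.card = m}

/-- A packing: an edge-disjoint family of copies. -/
def IsPacking (n s : ℕ) (E : Finset (Finset ℕ)) (P : Finset (Finset (Finset ℕ))) : Prop :=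
  (∀ C ∈ P, IsCopy n s E C) ∧
  ∀ C ∈ P, ∀ C' ∈ P, C ≠ C' → Disjoint C C'

/-- The packing number `ν(n,H)`. -/
noncomputable def nu (n s : ℕ) (E : Finset (Finset ℕ)) : ℕ :=
  sSup {m | ∃ P : Finset (Finset (Finset ℕ)), IsPacking n s E P ∧ P.card = m}

/-- The ordered Turán number: maximum number of edges of a subgraph of
`K^{(r)}_n` containing no copy of the hypergraph with edge set `E`. -/
noncomputable def exNum (n r s : ℕ) (E : Finset (Finset ℕ)) : ℕ :=
  sSup {m | ∃ G ⊆ (Finset.Icc 1 n).powersetCard r,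
    (∀ C : Finset (Finset ℕ), IsCopy n s E C → ¬ C ⊆ G) ∧ G.card = m}

/-- `S ⊆ [n]` is `m`-left-biased. -/
def LeftBiased (n m : ℕ) (S : Finset ℕ) : Prop :=
  ∃ u ≤ n / 2, (S ∩ Finset.Icc 1 u).card = m ∧ S ∩ Finset.Icc (n + 1 - u) n = ∅

/-- `h(n,t,m)`: the number of `m`-left-biased `t`-element subsets of `[n]`. -/
noncomputable def hcount (n t m : ℕ) : ℕ :=
  (((Finset.Icc 1 n).powersetCard t).filter (LeftBiased n m)).card

/-- A fractional transversal. -/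
def IsFracTransversal (n r s : ℕ) (E : Finset (Finset ℕ)) (w : Finset ℕ → ℝ) : Prop :=
  (∀ e ∈ (Finset.Icc 1 n).powersetCard r, 0 ≤ w e) ∧
  ∀ C : Finset (Finset ℕ), IsCopy n s E C → 1 ≤ ∑ e ∈ C, w e

/-- The fractional transversal number `τ*(n,H)`. -/
noncomputable def tauStar (n r s : ℕ) (E : Finset (Finset ℕ)) : ℝ :=
  sInf {x : ℝ | ∃ w : Finset ℕ → ℝ, IsFracTransversal n r s E w ∧
    x = ∑ e ∈ (Finset.Icc 1 n).powersetCard r, w e}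

/-- A `k`-edge-labeling of the ordered complete graph on `[n]`. -/
def IsLabeling (n k : ℕ) (φ : ℕ → ℕ → ℕ) : Prop :=
  ∀ u v : ℕ, u ∈ Finset.Icc 1 n → v ∈ Finset.Icc 1 n → u < v → φ u v ∈ Finset.Icc 1 k

/-- The number of good triples `u < v < w` in `[n]` (those with `φ(uv) < φ(vw)`). -/
def goodCount (n : ℕ) (φ : ℕ → ℕ → ℕ) : ℕ :=
  (((Finset.Icc 1 n) ×ˢ (Finset.Icc 1 n) ×ˢ (Finset.Icc 1 n)).filter
    (fun p => p.1 < p.2.1 ∧ p.2.1 < p.2.2 ∧ φ p.1 p.2.1 < φ p.2.1 p.2.2)).card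

/-- The number of bad triples `u < v < w` in `[n]` (those with `φ(uv) ≥ φ(vw)`). -/
def badCount (n : ℕ) (φ : ℕ → ℕ → ℕ) : ℕ :=
  (((Finset.Icc 1 n) ×ˢ (Finset.Icc 1 n) ×ˢ (Finset.Icc 1 n)).filter
    (fun p => p.1 < p.2.1 ∧ p.2.1 < p.2.2 ∧ ¬ φ p.1 p.2.1 < φ p.2.1 p.2.2)).card

/-- `f(n,k)`: the maximum number of good triples over all `k`-edge-labelings of `[n]`. -/
noncomputable def fmax (n k : ℕ) : ℕ :=
  sSup {m | ∃ φ : ℕ → ℕ → ℕ, IsLabeling n k φ ∧ goodCount n φ = m}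

/-- A labeling is monotone if `φ(uv) ≤ φ(vw)` whenever `u < v < w` in `[n]`. -/
def IsMonotone (n : ℕ) (φ : ℕ → ℕ → ℕ) : Prop :=
  ∀ u v w : ℕ, u ∈ Finset.Icc 1 n → v ∈ Finset.Icc 1 n → w ∈ Finset.Icc 1 n →
    u < v → v < w → φ u v ≤ φ v w

/-- `Φ_L(v) = max{φ(uv) : u < v}`, with `Φ_L(1) = 0`. -/
def PhiL (φ : ℕ → ℕ → ℕ) (v : ℕ) : ℕ := (Finset.Ico 1 v).sup (fun u => φ u v)

/-- `Φ_R(v) = min{φ(vw) : v < w ≤ n}`, with `Φ_R(n) = k+1`. -/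
noncomputable def PhiR (n k : ℕ) (φ : ℕ → ℕ → ℕ) (v : ℕ) : ℕ :=
  if v = n then k + 1 else sInf {m | ∃ w ∈ Finset.Ioc v n, φ v w = m}

/-- `X_i = {v ∈ [n] : Φ_L(v) = i}`. -/
def XL (n : ℕ) (φ : ℕ → ℕ → ℕ) (i : ℕ) : Finset ℕ :=
  (Finset.Icc 1 n).filter (fun v => PhiL φ v = i)

/-- `X̂_i = {v ∈ [n] : Φ_R(v) = i}`. -/
noncomputable def XR (n k : ℕ) (φ : ℕ → ℕ → ℕ) (i : ℕ) : Finset ℕ :=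
  (Finset.Icc 1 n).filter (fun v => PhiR n k φ v = i)
/-! ### Auxiliary material for the proof of `stmt13` -/

private def blk (q v : ℕ) : ℕ := (v - 1) / q

private lemma blk_mono (q : ℕ) : Monotone (blk q) :=
  fun a b h => Nat.div_le_div_right (Nat.sub_le_sub_right h 1)

private lemma blk_lt (n k q v : ℕ) (hq : 0 < q) (hn : n ≤ k * q)
    (hv : v ∈ Finset.Icc 1 n) : blk q v < k := by
  rw [Finset.mem_Icc] at hv
  have : v - 1 < k * q := by omega
  exact (Nat.div_lt_iff_lt_mul hq).mpr (by omega)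

private def goodSet (n q : ℕ) : Finset (Finset ℕ) :=
  ((Finset.Icc 1 n).powersetCard 3).filter (fun e => ∃ a ∈ e, ∃ b ∈ e, blk q a ≠ blk q b)

private lemma goodSet_free (n k q : ℕ) (hq : 0 < q) (hn : n ≤ k * q)
    (C : Finset (Finset ℕ)) (hC : IsCopy n (2*k+1) (pathEdges 3 (2*k+1)) C) :
    ¬ C ⊆ goodSet n q := by
  obtain ⟨f, hf, hmap, rfl⟩ := hC
  intro hsub
  set s := 2*k+1 with hs
  have hmono : ∀ x y, 1 ≤ x → y ≤ s → x ≤ y → f x ≤ f y := by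
    intro x y hx hy hxy
    rcases eq_or_lt_of_le hxy with rfl | h
    · exact le_rfl
    · exact (hf (by simp only [Finset.coe_Icc, Set.mem_Icc]; omega)
        (by simp only [Finset.coe_Icc, Set.mem_Icc]; omega) h).le
  have hstep : ∀ i, 1 ≤ i → i + 2 ≤ s → blk q (f i) < blk q (f (i+2)) := by
    intro i hi his
    have hedge : Finset.Icc i (i+2) ∈ pathEdges 3 s := by
      unfold pathEdges
      refine Finset.mem_image.mpr ⟨i, ?_, by norm_num⟩
      simp only [Finset.mem_Icc]; omega
    have hT : (Finset.Icc i (i+2)).image f ∈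
        (pathEdges 3 s).image (fun e => e.image f) := Finset.mem_image_of_mem _ hedge
    have hG := hsub hT
    rw [goodSet, Finset.mem_filter] at hG
    obtain ⟨-, a, ha, b, hb, hab⟩ := hG
    have key : blk q (f i) ≤ blk q (f (i+2)) :=
      blk_mono q (hmono i (i+2) hi (by omega) (by omega))
    rcases lt_or_eq_of_le key with h | h
    · exact h
    · exfalso
      apply hab
      have hall : ∀ c ∈ (Finset.Icc i (i+2)).image f, blk q c = blk q (f i) := by
        intro c hc
        obtain ⟨x, hx, rfl⟩ := Finset.mem_image.mp hc
        rw [Finset.mem_Icc] at hx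
        have h1 := blk_mono q (hmono i x hi (by omega) hx.1)
        have h2 := blk_mono q (hmono x (i+2) (by omega) (by omega) hx.2)
        omega
      rw [hall a ha, hall b hb]
  have hchain : ∀ j, j ≤ k → blk q (f 1) + j ≤ blk q (f (1 + 2*j)) := by
    intro j
    induction j with
    | zero => simp
    | succ j ih =>
      intro hj
      have h1 := ih (by omega)
      have h2 := hstep (1 + 2*j) (by omega) (by omega)
      rw [show 1 + 2*j + 2 = 1 + 2*(j+1) from by ring] at h2
      omega
  have hfinal := hchain k le_rfl
  rw [show 1 + 2*k = s from by omega] at hfinal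
  have hfs : f s ∈ Finset.Icc 1 n := hmap s (by simp only [Finset.mem_Icc]; omega)
  have := blk_lt n k q (f s) hq hn hfs
  omega

private lemma goodSet_card (n k q : ℕ) (hq : 0 < q) (hn : n ≤ k * q) :
    n.choose 3 ≤ (goodSet n q).card + k * q.choose 3 := by
  classical
  set A := (Finset.Icc 1 n).powersetCard 3 with hA
  have hAcard : A.card = n.choose 3 := by
    rw [hA, Finset.card_powersetCard, Nat.card_Icc]; norm_num
  have hsplit := Finset.card_filter_add_card_filter_not (s := A)
      (p := fun e => ∃ a ∈ e, ∃ b ∈ e, blk q a ≠ blk q b)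
  set bad := A.filter (fun e => ¬ ∃ a ∈ e, ∃ b ∈ e, blk q a ≠ blk q b) with hbaddef
  have hbad : bad ⊆ (Finset.range k).biUnion
      (fun j => (Finset.Icc (j*q+1) (j*q+q)).powersetCard 3) := by
    intro e he
    rw [hbaddef, Finset.mem_filter] at he
    obtain ⟨heA, hall⟩ := he
    push_neg at hall
    rw [hA, Finset.mem_powersetCard] at heA
    obtain ⟨hsubA, hcard⟩ := heA
    have hne : e.Nonempty := Finset.card_pos.mp (by omega)
    obtain ⟨a, ha⟩ := hne
    refine Finset.mem_biUnion.mpr ⟨blk q a,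
      Finset.mem_range.mpr (blk_lt n k q a hq hn (hsubA ha)), ?_⟩
    rw [Finset.mem_powersetCard]
    refine ⟨?_, hcard⟩
    intro b hb
    have hba : blk q b = blk q a := hall b hb a ha
    have hb1 : b ∈ Finset.Icc 1 n := hsubA hb
    rw [Finset.mem_Icc] at hb1 ⊢
    have h1 : blk q a * q ≤ b - 1 := by
      rw [← hba]; exact Nat.div_mul_le_self _ _
    have h2 : b - 1 < (blk q a + 1) * q := by
      rw [← hba]; exact (Nat.div_lt_iff_lt_mul hq).mp (Nat.lt_succ_self _)
    have hq1 : blk q a * q + q = (blk q a + 1) * q := by ring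
    omega
  have hbadcard : bad.card ≤ k * q.choose 3 := by
    calc bad.card ≤ ((Finset.range k).biUnion
          (fun j => (Finset.Icc (j*q+1) (j*q+q)).powersetCard 3)).card :=
        Finset.card_le_card hbad
      _ ≤ ∑ j ∈ Finset.range k, ((Finset.Icc (j*q+1) (j*q+q)).powersetCard 3).card :=
        Finset.card_biUnion_le
      _ = ∑ _j ∈ Finset.range k, q.choose 3 := by
        refine Finset.sum_congr rfl fun j _ => ?_
        rw [Finset.card_powersetCard, Nat.card_Icc]
        congr 1
        omega
      _ = k * q.choose 3 := by rw [Finset.sum_const, Finset.card_range, smul_eq_mul]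
  have hgood : (goodSet n q).card
      = (A.filter (fun e => ∃ a ∈ e, ∃ b ∈ e, blk q a ≠ blk q b)).card := by
    rw [goodSet, hA]
  omega

private lemma le_exNum (n k q : ℕ) (hq : 0 < q) (hn : n ≤ k * q) :
    (goodSet n q).card ≤ exNum n 3 (2*k+1) (pathEdges 3 (2*k+1)) := by
  apply le_csSup
  · refine ⟨((Finset.Icc 1 n).powersetCard 3).card, ?_⟩
    rintro m ⟨G, hG, -, rfl⟩
    exact Finset.card_le_card hG
  · exact ⟨goodSet n q, Finset.filter_subset _ _,
      fun C hC => goodSet_free n k q hq hn C hC, rfl⟩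

private lemma exNum_le_choose (n k : ℕ) (hk : 1 ≤ k) :
    exNum n 3 (2*k+1) (pathEdges 3 (2*k+1)) ≤ n.choose 3 := by
  have hA : ((Finset.Icc 1 n).powersetCard 3).card = n.choose 3 := by
    rw [Finset.card_powersetCard, Nat.card_Icc]; norm_num
  rw [exNum]
  apply csSup_le
  · refine ⟨0, ∅, Finset.empty_subset _, ?_, rfl⟩
    intro C hC hsubC
    obtain ⟨f, -, -, rfl⟩ := hC
    have hne : (pathEdges 3 (2*k+1)).Nonempty := by
      refine ⟨Finset.Icc 1 3, ?_⟩
      unfold pathEdges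
      refine Finset.mem_image.mpr ⟨1, ?_, by norm_num⟩
      simp only [Finset.mem_Icc]
      omega
    have := (hne.image (fun e => e.image f))
    rw [Finset.subset_empty] at hsubC
    rw [hsubC] at this
    exact Finset.not_nonempty_empty this
  · rintro m ⟨G, hG, -, rfl⟩
    rw [← hA]; exact Finset.card_le_card hG

/-- For odd `s ≥ 3`,
`liminf_{n→∞} ex(n, P^{(3)}_s)/C(n,3) ≥ 1 - 4/(s-1)^2`. -/
theorem stmt13 (s : ℕ) (hs : 3 ≤ s) (hodd : Odd s) :
    (1 - 4 / ((s : ℝ) - 1) ^ 2) ≤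
      Filter.atTop.liminf
        (fun n : ℕ => (exNum n 3 s (pathEdges 3 s) : ℝ) / (n.choose 3 : ℝ)) := by
  obtain ⟨k, hk⟩ := hodd
  obtain rfl : s = 2 * k + 1 := by omega
  have hk1 : 1 ≤ k := by omega
  have hk0 : (0:ℝ) < (k:ℝ) := by exact_mod_cast hk1
  set a : ℕ → ℝ :=
    fun n => (exNum n 3 (2*k+1) (pathEdges 3 (2*k+1)) : ℝ) / (n.choose 3 : ℝ) with ha
  set b : ℕ → ℝ := fun n => 1 - (((n:ℝ) + k) / ((n:ℝ) - 2))^3 / (k:ℝ)^2 with hbdef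
  -- limit of b
  have h2 : Filter.Tendsto (fun n : ℕ => (n:ℝ) - 2) Filter.atTop Filter.atTop :=
    Filter.tendsto_atTop_add_const_right _ _ tendsto_natCast_atTop_atTop
  have h0 : Filter.Tendsto (fun n : ℕ => ((k:ℝ) + 2) / ((n:ℝ) - 2))
      Filter.atTop (nhds 0) := Filter.Tendsto.div_atTop tendsto_const_nhds h2
  have hc1 : Filter.Tendsto (fun n : ℕ => ((n:ℝ) + k) / ((n:ℝ) - 2))
      Filter.atTop (nhds 1) := by
    have h3 : Filter.Tendsto (fun n : ℕ => 1 + ((k:ℝ)+2)/((n:ℝ)-2))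
        Filter.atTop (nhds 1) := by
      have := tendsto_const_nhds (x := (1:ℝ)) (f := Filter.atTop (α := ℕ)) |>.add h0
      simpa using this
    refine Filter.Tendsto.congr' ?_ h3
    filter_upwards [Filter.eventually_ge_atTop 3] with n hn
    have hn3 : (3:ℝ) ≤ (n:ℝ) := by exact_mod_cast hn
    have hne : (n:ℝ) - 2 ≠ 0 := by linarith
    field_simp
    try ring
  have hb_tendsto : Filter.Tendsto b Filter.atTop (nhds (1 - 1/(k:ℝ)^2)) := by
    have := ((hc1.pow 3).div_const ((k:ℝ)^2)).const_sub 1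
    simpa using this
  -- eventual inequality b ≤ a
  have hab : ∀ᶠ n in Filter.atTop, b n ≤ a n := by
    filter_upwards [Filter.eventually_ge_atTop 3] with n hn3
    set q : ℕ := n / k + 1 with hqdef
    have hq : 0 < q := Nat.succ_pos _
    have hn : n ≤ k * q := by
      have h1 := Nat.div_add_mod n k
      have h2 : n % k < k := Nat.mod_lt _ (by omega)
      have h3 : k * q = k * (n / k) + k := by rw [hqdef]; ring
      omega
    have hnat : n.choose 3 ≤ (goodSet n q).card + k * q.choose 3 := goodSet_card n k q hq hn
    have hEle : (goodSet n q).card ≤ exNum n 3 (2*k+1) (pathEdges 3 (2*k+1)) :=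
      le_exNum n k q hq hn
    have hnat2 : n.choose 3 ≤ exNum n 3 (2*k+1) (pathEdges 3 (2*k+1)) + k * q.choose 3 := by
      omega
    set c : ℝ := (n.choose 3 : ℝ) with hc
    set E : ℝ := (exNum n 3 (2*k+1) (pathEdges 3 (2*k+1)) : ℝ) with hEdef
    have hcE : c ≤ E + (k:ℝ) * (q.choose 3 : ℝ) := by
      rw [hc, hEdef]; exact_mod_cast hnat2
    have hn3R : (3:ℝ) ≤ (n:ℝ) := by exact_mod_cast hn3
    have hn2pos : (0:ℝ) < (n:ℝ) - 2 := by linarith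
    -- lower bound on c
    have hclow : ((n:ℝ) - 2)^3 / 6 ≤ c := by
      have h1 : (n + 1 - 3)^3 ≤ n.descFactorial 3 := Nat.pow_sub_le_descFactorial n 3
      have h2 : n.descFactorial 3 = 6 * n.choose 3 := by
        rw [Nat.descFactorial_eq_factorial_mul_choose]
        norm_num [Nat.factorial]
      have h3 : (n - 2)^3 ≤ 6 * n.choose 3 := by
        rw [← h2]; simpa [show n + 1 - 3 = n - 2 from by omega] using h1
      have h4 : ((n:ℝ) - 2)^3 ≤ 6 * c := by
        have h5 := (Nat.cast_le (α := ℝ)).mpr h3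
        push_cast [Nat.cast_sub (show 2 ≤ n by omega)] at h5
        rw [hc]
        convert h5 using 2 <;> push_cast <;> ring
      linarith
    have hcpos : (0:ℝ) < c := by
      have : (0:ℝ) < ((n:ℝ) - 2)^3 / 6 := by positivity
      linarith
    -- upper bound on q.choose 3
    have hqup : (q.choose 3 : ℝ) ≤ (((n:ℝ) + k)/(k:ℝ))^3 / 6 := by
      have h1 : 6 * q.choose 3 ≤ q^3 := by
        have h6 := Nat.descFactorial_le_pow q 3
        rw [Nat.descFactorial_eq_factorial_mul_choose] at h6
        calc 6 * q.choose 3 = Nat.factorial 3 * q.choose 3 := by norm_num [Nat.factorial]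
          _ ≤ q^3 := h6
      have h2 : (q:ℝ) ≤ ((n:ℝ) + k)/(k:ℝ) := by
        have hdiv : ((n / k : ℕ) : ℝ) ≤ (n:ℝ)/(k:ℝ) := Nat.cast_div_le
        have hqr : (q:ℝ) = ((n / k : ℕ) : ℝ) + 1 := by rw [hqdef]; push_cast; ring
        rw [hqr]
        have : (n:ℝ)/(k:ℝ) + 1 = ((n:ℝ) + k)/(k:ℝ) := by field_simp
        linarith
      have h3 : (q:ℝ)^3 ≤ (((n:ℝ) + k)/(k:ℝ))^3 :=
        pow_le_pow_left₀ (by positivity) h2 3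
      have h4 : 6 * (q.choose 3 : ℝ) ≤ (q:ℝ)^3 := by exact_mod_cast h1
      linarith
    -- combine
    have hDpos : (0:ℝ) < ((n:ℝ) - 2)^3 / 6 := by positivity
    have hnum : (k:ℝ) * (q.choose 3 : ℝ) ≤ (k:ℝ) * ((((n:ℝ) + k)/(k:ℝ))^3 / 6) := by
      nlinarith
    have hfrac : (k:ℝ) * (q.choose 3 : ℝ) / c
        ≤ ((k:ℝ) * ((((n:ℝ) + k)/(k:ℝ))^3 / 6)) / (((n:ℝ) - 2)^3 / 6) := by
      apply div_le_div₀ (by positivity) hnum hDpos hclow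
    have hfrac2 : ((k:ℝ) * ((((n:ℝ) + k)/(k:ℝ))^3 / 6)) / (((n:ℝ) - 2)^3 / 6)
        = (((n:ℝ) + k) / ((n:ℝ) - 2))^3 / (k:ℝ)^2 := by
      have hne : (n:ℝ) - 2 ≠ 0 := ne_of_gt hn2pos
      have hkne : (k:ℝ) ≠ 0 := ne_of_gt hk0
      field_simp
    rw [hfrac2] at hfrac
    have haE : 1 - (k:ℝ) * (q.choose 3 : ℝ) / c ≤ E / c := by
      have h : c - (k:ℝ) * (q.choose 3 : ℝ) ≤ E := by linarith
      calc 1 - (k:ℝ) * (q.choose 3 : ℝ) / c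
          = (c - (k:ℝ) * (q.choose 3 : ℝ)) / c := by field_simp
        _ ≤ E / c := by gcongr
    show b n ≤ a n
    rw [hbdef, ha]
    simp only
    rw [← hc, ← hEdef]
    linarith
  -- conclude via liminf
  have hcobddA : Filter.IsCoboundedUnder (· ≥ ·) Filter.atTop a := by
    refine Filter.isCoboundedUnder_ge_of_le Filter.atTop (x := 1) fun n => ?_
    rw [ha]
    simp only
    rcases Nat.eq_zero_or_pos (n.choose 3) with h | h
    · simp [h]
    · have hpos : (0:ℝ) < (n.choose 3 : ℝ) := by exact_mod_cast h
      rw [div_le_one hpos]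
      exact_mod_cast exNum_le_choose n k hk1
  have hlim : Filter.liminf b Filter.atTop = 1 - 1/(k:ℝ)^2 := hb_tendsto.liminf_eq
  have hmain : Filter.liminf b Filter.atTop ≤ Filter.liminf a Filter.atTop :=
    Filter.liminf_le_liminf hab hb_tendsto.isBoundedUnder_ge hcobddA
  have hcast : (1:ℝ) - 4 / (((2*k+1 : ℕ) : ℝ) - 1)^2 = 1 - 1/(k:ℝ)^2 := by
    have hkne : (k:ℝ) ≠ 0 := ne_of_gt hk0
    push_cast
    have : (2*(k:ℝ)+1) - 1 = 2*k := by ring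
    rw [this]
    field_simp
    ring
  rw [hcast, ← hlim]
  exact hmain
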